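/- Let p be a prime and let Δ be the endomorphism of ℚ_p[[X]] with X^Δ = X^p (coefficients fixed). The Artin–Hasse type exponential E(f) = exp((1 + Δ/p + Δ²/p² + ...)(f)) sends X·ℤ_p[[X]] into 1 + X·ℤ_p[[X]]; i.e., for f ∈ X·ℤ_p[[X]], E(f) has coefficients in ℤ_p. -/

import Mathlib

open PowerSeries

/-- The Artin–Hasse type operator `1 + Δ/p + Δ²/p² + ⋯` on `ℚ_p[[X]]`, where
`Δ` is the endomorphism with `X^Δ = X^p` (coefficients fixed); computed
coefficientwise (the coefficient of `X^n` of `Δ^k f / p^k` is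
`(coeff (n/p^k) f)/p^k` if `p^k ∣ n` and `0` otherwise, and for `n ≥ 1` only
`k ≤ n` can contribute). -/
noncomputable def AHop (p : ℕ) [Fact p.Prime] (f : PowerSeries ℚ_[p]) : PowerSeries ℚ_[p] :=
  PowerSeries.mk fun n =>
    ∑ k ∈ Finset.range (n + 1),
      if p ^ k ∣ n then coeff (n / p ^ k) f / (p : ℚ_[p]) ^ k else 0

/-- The formal exponential `exp(f) = Σ_{m≥0} f^m / m!`, computed coefficientwise
(only the terms with `m ≤ k` contribute to the coefficient of `X^k` when the
constant coefficient of `f` vanishes). -/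
noncomputable def pexp {F : Type*} [Field F] [CharZero F] (f : PowerSeries F) : PowerSeries F :=
  PowerSeries.mk fun k =>
    ∑ m ∈ Finset.range (k + 1), coeff k (f ^ m) / (Nat.factorial m : F)

namespace VostokovAux

open Finset PowerSeries

variable {F : Type*} [Field F] [CharZero F]

lemma coeff_pexp (f : PowerSeries F) (k : ℕ) :
    coeff k (pexp f) = ∑ m ∈ range (k+1), coeff k (f ^ m) / (Nat.factorial m : F) := by
  simp [pexp]

lemma constantCoeff_pexp (f : PowerSeries F) : constantCoeff (pexp f) = 1 := by
  rw [← coeff_zero_eq_constantCoeff_apply, coeff_pexp]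
  simp

lemma coeff_pow_zero {f : PowerSeries F} (hf : constantCoeff f = 0) {k m : ℕ} (h : k < m) :
    coeff k (f ^ m) = 0 := by
  obtain ⟨g, rfl⟩ := (X_dvd_iff).mpr hf
  rw [mul_pow]
  exact X_pow_dvd_iff.mp (Dvd.intro _ rfl) k h

lemma coeff_mul_pow_zero {u v : PowerSeries F} (hu : constantCoeff u = 0)
    (hv : constantCoeff v = 0) {k a b : ℕ} (h : k < a + b) :
    coeff k (u ^ a * v ^ b) = 0 := by
  obtain ⟨g, rfl⟩ := (X_dvd_iff).mpr hu
  obtain ⟨h', rfl⟩ := (X_dvd_iff).mpr hv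
  have : X ^ (a+b) ∣ (X * g) ^ a * (X * h') ^ b := by
    rw [mul_pow, mul_pow, pow_add]
    exact ⟨g ^ a * h' ^ b, by ring⟩
  exact X_pow_dvd_iff.mp this k h

lemma coeff_pexp_of_le {f : PowerSeries F} (hf : constantCoeff f = 0) {k N : ℕ} (h : k ≤ N) :
    coeff k (pexp f) = ∑ m ∈ range (N+1), coeff k (f ^ m) / (Nat.factorial m : F) := by
  rw [coeff_pexp]
  apply Finset.sum_subset (by intro x hx; simp only [mem_range] at *; omega)
  intro m hm hnm
  simp only [mem_range] at hm hnm
  rw [coeff_pow_zero hf (by omega), zero_div]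

lemma pexp_zero : pexp (0 : PowerSeries F) = 1 := by
  ext k
  rw [coeff_pexp, Finset.sum_eq_single 0]
  · simp
  · intro m _ hne; rw [zero_pow hne, map_zero, zero_div]
  · intro h; exact absurd (mem_range.mpr (by omega)) h

lemma triangle_eq_square {M : Type*} [AddCommMonoid M] (k : ℕ) (t : ℕ → ℕ → M)
    (ht : ∀ a b, k < a + b → t a b = 0) :
    ∑ m ∈ range (k+1), ∑ a ∈ range (m+1), t a (m - a)
      = ∑ a ∈ range (k+1), ∑ b ∈ range (k+1), t a b := by
  rw [Finset.sum_sigma', ← Finset.sum_product']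
  rw [← Finset.sum_subset (Finset.filter_subset (fun x : ℕ × ℕ => x.1 + x.2 ≤ k) _)
    (by intro x _ hx; simp only [mem_filter, mem_product, mem_range] at hx
        push_neg at hx
        by_cases h1 : x.1 < k + 1
        · by_cases h2 : x.2 < k + 1
          · exact ht _ _ (by omega)
          · simp only [mem_product, mem_range] at *; omega
        · simp only [mem_product, mem_range] at *; omega)]
  refine Finset.sum_nbij' (fun x => (x.2, x.1 - x.2)) (fun y => ⟨y.1 + y.2, y.1⟩) ?_ ?_ ?_ ?_ ?_
  · intro x hx
    simp only [mem_sigma, mem_range] at hx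
    simp only [mem_filter, mem_product, mem_range]
    omega
  · intro y hy
    simp only [mem_filter, mem_product, mem_range] at hy
    simp only [mem_sigma, mem_range]
    omega
  · intro x hx
    simp only [mem_sigma, mem_range] at hx
    show (⟨x.2 + (x.1 - x.2), x.2⟩ : (_ : ℕ) × ℕ) = x
    rw [show x.2 + (x.1 - x.2) = x.1 by omega]
  · intro y hy
    simp
  · intro x hx
    rfl


lemma pexp_add {u v : PowerSeries F} (hu : constantCoeff u = 0)
    (hv : constantCoeff v = 0) :
    pexp (u + v) = pexp u * pexp v := by
  ext k
  set t : ℕ → ℕ → F := fun a b =>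
    coeff k (u ^ a * v ^ b) / ((Nat.factorial a : F) * (Nat.factorial b : F)) with ht
  have htz : ∀ a b, k < a + b → t a b = 0 := fun a b h => by
    rw [ht]; dsimp only; rw [coeff_mul_pow_zero hu hv h, zero_div]
  -- LHS
  have hL : coeff k (pexp (u + v)) = ∑ m ∈ range (k+1), ∑ a ∈ range (m+1), t a (m - a) := by
    rw [coeff_pexp]
    refine Finset.sum_congr rfl fun m hm => ?_
    rw [add_pow]
    rw [map_sum, Finset.sum_div]
    refine Finset.sum_congr rfl fun a ha => ?_
    simp only [mem_range] at ha
    have ha' : a ≤ m := by omega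
    rw [show ((m.choose a : ℕ) : PowerSeries F) = C ((m.choose a : ℕ) : F) by
      rw [map_natCast C]]
    rw [coeff_mul_C, ht]
    dsimp only
    have key : ((m.choose a : ℕ) : F) * ((a.factorial : F) * ((m - a).factorial : F))
        = (m.factorial : F) := by
      rw [← Nat.cast_mul, ← Nat.cast_mul, ← Nat.choose_mul_factorial_mul_factorial ha',
        mul_assoc]
    have h1 : (m.factorial : F) ≠ 0 := Nat.cast_ne_zero.mpr m.factorial_ne_zero
    have h2 : (a.factorial : F) ≠ 0 := Nat.cast_ne_zero.mpr a.factorial_ne_zero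
    have h3 : ((m - a).factorial : F) ≠ 0 := Nat.cast_ne_zero.mpr (m - a).factorial_ne_zero
    field_simp
    linear_combination (coeff k (u ^ a * v ^ (m - a))) * key
  -- RHS
  have hR : coeff k (pexp u * pexp v) = ∑ a ∈ range (k+1), ∑ b ∈ range (k+1), t a b := by
    rw [coeff_mul]
    have step1 : ∀ x ∈ antidiagonal k,
        coeff x.1 (pexp u) * coeff x.2 (pexp v)
          = ∑ a ∈ range (k+1), ∑ b ∈ range (k+1),
              (coeff x.1 (u ^ a) / (Nat.factorial a : F))
                * (coeff x.2 (v ^ b) / (Nat.factorial b : F)) := by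
      intro x hx
      have h1 : x.1 ≤ k := Finset.HasAntidiagonal.antidiagonal.fst_le hx
      have h2 : x.2 ≤ k := Finset.HasAntidiagonal.antidiagonal.snd_le hx
      rw [coeff_pexp_of_le hu h1, coeff_pexp_of_le hv h2, Finset.sum_mul_sum]
    rw [Finset.sum_congr rfl step1, Finset.sum_comm]
    refine Finset.sum_congr rfl fun a _ => ?_
    rw [Finset.sum_comm]
    refine Finset.sum_congr rfl fun b _ => ?_
    rw [ht]
    dsimp only
    rw [coeff_mul, Finset.sum_div]
    refine Finset.sum_congr rfl fun x hx => ?_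
    rw [div_mul_div_comm]
  rw [hL, hR, triangle_eq_square k t htz]

lemma pexp_nsmul (m : ℕ) {u : PowerSeries F} (hu : constantCoeff u = 0) :
    pexp (m • u) = (pexp u) ^ m := by
  induction m with
  | zero => simpa using pexp_zero
  | succ n ih =>
      rw [succ_nsmul, pexp_add (by simp [hu]) hu, ih, pow_succ]


section D
variable {R : Type*} [CommRing R] (p : ℕ) [hp : Fact p.Prime]

/-- substitution X ↦ X^p, coefficientwise. -/
noncomputable def Dop (f : PowerSeries R) : PowerSeries R :=
  PowerSeries.mk fun n => if p ∣ n then coeff (n / p) f else 0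

lemma coeff_Dop (f : PowerSeries R) (n : ℕ) :
    coeff n (Dop p f) = if p ∣ n then coeff (n / p) f else 0 := by
  simp [Dop]

lemma constantCoeff_Dop (f : PowerSeries R) :
    constantCoeff (Dop p f) = constantCoeff f := by
  rw [← coeff_zero_eq_constantCoeff_apply, coeff_Dop, if_pos (dvd_zero p), Nat.zero_div,
    coeff_zero_eq_constantCoeff_apply]

lemma Dop_add (f g : PowerSeries R) : Dop p (f + g) = Dop p f + Dop p g := by
  ext n
  simp only [map_add, coeff_Dop]
  split <;> simp

lemma Dop_one : Dop p (1 : PowerSeries R) = 1 := by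
  have hp2 : 2 ≤ p := hp.out.two_le
  ext n
  rw [coeff_Dop, coeff_one, coeff_one]
  rcases Nat.eq_zero_or_pos n with rfl | hn
  · simp
  · rw [if_neg (by omega : ¬ n = 0)]
    by_cases hdvd : p ∣ n
    · rw [if_pos hdvd, if_neg]
      have h1 : p ≤ n := Nat.le_of_dvd hn hdvd
      have h2 : 1 ≤ n / p := (Nat.one_le_div_iff (by omega)).mpr h1
      omega
    · rw [if_neg hdvd]

lemma sum_range_if_dvd {M : Type*} [AddCommMonoid M] {n : ℕ} (hn : p ∣ n) (t : ℕ → M) :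
    ∑ i ∈ Finset.range (n+1), (if p ∣ i then t (i/p) else 0)
      = ∑ a ∈ Finset.range (n/p+1), t a := by
  have hp1 : 0 < p := hp.out.pos
  rw [← Finset.sum_filter]
  refine Finset.sum_nbij' (fun i => i / p) (fun a => p * a) ?_ ?_ ?_ ?_ ?_
  · intro i hi
    simp only [Finset.mem_filter, Finset.mem_range] at hi ⊢
    have := Nat.div_le_div_right (c := p) (Nat.le_of_lt_succ hi.1)
    exact Nat.lt_succ_of_le (Nat.div_le_div_right (Nat.le_of_lt_succ hi.1))
  · intro a ha
    simp only [Finset.mem_filter, Finset.mem_range] at ha ⊢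
    constructor
    · have : a ≤ n / p := Nat.le_of_lt_succ ha
      have := Nat.mul_le_mul_left p this
      have h2 : p * (n / p) = n := Nat.mul_div_cancel' hn
      omega
    · exact Dvd.intro a rfl
  · intro i hi
    simp only [Finset.mem_filter, Finset.mem_range] at hi
    exact Nat.mul_div_cancel' hi.2
  · intro a ha
    exact Nat.mul_div_cancel_left a hp1
  · intro i hi
    rfl

lemma Dop_mul (f g : PowerSeries R) : Dop p (f * g) = Dop p f * Dop p g := by
  have hp1 : 0 < p := hp.out.pos
  ext n
  rw [coeff_mul, coeff_Dop]
  rw [Finset.Nat.sum_antidiagonal_eq_sum_range_succ_mk]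
  by_cases hn : p ∣ n
  · rw [if_pos hn, coeff_mul, Finset.Nat.sum_antidiagonal_eq_sum_range_succ_mk]
    have step : ∀ i ∈ Finset.range (n+1),
        coeff i (Dop p f) * coeff (n - i) (Dop p g)
          = if p ∣ i then coeff (i/p) f * coeff (n/p - i/p) g else 0 := by
      intro i hi
      simp only [Finset.mem_range] at hi
      rw [coeff_Dop, coeff_Dop]
      by_cases hpi : p ∣ i
      · rw [if_pos hpi, if_pos hpi, if_pos (Nat.dvd_sub hn hpi)]
        obtain ⟨a, rfl⟩ := hpi
        obtain ⟨m, rfl⟩ := hn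
        rw [show p * m - p * a = p * (m - a) from (Nat.mul_sub p m a).symm,
          Nat.mul_div_cancel_left _ hp1, Nat.mul_div_cancel_left _ hp1,
          Nat.mul_div_cancel_left _ hp1]
      · rw [if_neg hpi, zero_mul, if_neg hpi]
    rw [Finset.sum_congr rfl step]
    rw [sum_range_if_dvd p hn (fun a => coeff a f * coeff (n/p - a) g)]
  · rw [if_neg hn]
    symm
    apply Finset.sum_eq_zero
    intro i hi
    simp only [Finset.mem_range] at hi
    rw [coeff_Dop, coeff_Dop]
    by_cases hpi : p ∣ i
    · rw [if_pos hpi]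
      rw [if_neg (fun hni => hn (by
        have : n = i + (n - i) := by omega
        rw [this]; exact Nat.dvd_add hpi hni))]
      rw [mul_zero]
    · rw [if_neg hpi, zero_mul]

lemma Dop_pow (f : PowerSeries R) (m : ℕ) : Dop p (f ^ m) = (Dop p f) ^ m := by
  induction m with
  | zero => simpa using Dop_one p
  | succ n ih => rw [pow_succ, pow_succ, Dop_mul, ih]

end D


section AH
variable (p : ℕ) [hp : Fact p.Prime]

lemma coeff_AHop (f : PowerSeries ℚ_[p]) (n : ℕ) :
    coeff n (AHop p f) = ∑ k ∈ Finset.range (n + 1),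
      if p ^ k ∣ n then coeff (n / p ^ k) f / (p : ℚ_[p]) ^ k else 0 := by
  simp [AHop]

lemma constantCoeff_AHop {f : PowerSeries ℚ_[p]} (hf : constantCoeff f = 0) :
    constantCoeff (AHop p f) = 0 := by
  rw [← coeff_zero_eq_constantCoeff_apply, coeff_AHop]
  simp [coeff_zero_eq_constantCoeff_apply, hf]

lemma AH_rel {f : PowerSeries ℚ_[p]} (hf : constantCoeff f = 0) :
    (p : ℚ_[p]) • AHop p f = (p : ℚ_[p]) • f + Dop p (AHop p f) := by
  have hp1 : 0 < p := hp.out.pos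
  have hp2 : 2 ≤ p := hp.out.two_le
  have hpQ : (p : ℚ_[p]) ≠ 0 := Nat.cast_ne_zero.mpr (by omega)
  ext n
  rw [map_add, coeff_smul, coeff_smul, coeff_Dop, coeff_AHop]
  by_cases hn : p ∣ n
  · rcases Nat.eq_zero_or_pos n with rfl | hn1
    · simp [coeff_zero_eq_constantCoeff_apply, hf, constantCoeff_AHop p hf]
    · have hnp : p ≤ n := Nat.le_of_dvd hn1 hn
      have hnpn : n / p + 1 ≤ n := by
        have : n / p ≤ n / 2 := Nat.div_le_div_left hp2 (by omega)
        have : n / 2 ≤ n - 1 := by omega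
        omega
      rw [if_pos hn, coeff_AHop, Finset.smul_sum, Finset.sum_range_succ']
      have g0 : (p : ℚ_[p]) • (if p ^ 0 ∣ n then coeff (n / p ^ 0) f / (p : ℚ_[p]) ^ 0 else 0)
          = (p : ℚ_[p]) • coeff n f := by
        rw [if_pos (by simpa using Nat.one_dvd n)]
        simp
      rw [g0, add_comm]
      congr 1
      -- remaining: Σ_{i∈range n} p • g (i+1) = Σ_{k∈range (n/p+1)} h k
      rw [← Finset.sum_subset (Finset.range_subset_range.mpr hnpn)
        (by
          intro k hk hk2
          simp only [Finset.mem_range] at hk hk2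
          have hnd : ¬ p ^ (k+1) ∣ n := by
            intro hdvd
            have h1 : p ^ (k+1) ≤ n := Nat.le_of_dvd (by omega) hdvd
            have h0 : p ^ k * p ≤ n := by rw [← pow_succ]; omega
            have h2 : p ^ k ≤ n / p := (Nat.le_div_iff_mul_le hp1).mpr h0
            have h3 : k < 2 ^ k := Nat.lt_two_pow_self
            have h4 : (2:ℕ) ^ k ≤ p ^ k := Nat.pow_le_pow_left hp2 k
            omega
          rw [if_neg hnd, smul_zero])]
      refine Finset.sum_congr rfl fun i hi => ?_
      have hcond : (p ^ (i+1) ∣ n) ↔ (p ^ i ∣ n / p) := by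
        rw [Nat.dvd_div_iff_mul_dvd hn, ← pow_succ']
      by_cases hd : p ^ (i+1) ∣ n
      · rw [if_pos hd, if_pos (hcond.mp hd)]
        rw [Nat.div_div_eq_div_mul, ← pow_succ']
        rw [smul_eq_mul, pow_succ']
        field_simp
        ring
      · rw [if_neg hd, if_neg (fun h => hd (hcond.mpr h)), smul_zero]
  · rw [if_neg hn, add_zero]
    rw [Finset.smul_sum, Finset.sum_eq_single 0]
    · rw [if_pos (by simpa using Nat.one_dvd n)]
      simp
    · intro k hk hk0
      rw [if_neg, smul_zero]
      intro hdvd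
      exact hn (dvd_trans (dvd_pow_self p hk0) hdvd)
    · intro h
      exact absurd (Finset.mem_range.mpr (by omega)) h

lemma Dop_pexp {u : PowerSeries ℚ_[p]} (hu : constantCoeff u = 0) :
    Dop p (pexp u) = pexp (Dop p u) := by
  ext n
  have hR : coeff n (pexp (Dop p u)) = ∑ m ∈ Finset.range (n+1),
      (if p ∣ n then coeff (n/p) (u^m) else 0) / (Nat.factorial m : ℚ_[p]) := by
    rw [coeff_pexp]
    refine Finset.sum_congr rfl fun m _ => ?_
    rw [← Dop_pow, coeff_Dop]
  rw [coeff_Dop, hR]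
  by_cases hn : p ∣ n
  · rw [if_pos hn, coeff_pexp]
    simp only [if_pos hn]
    refine Finset.sum_subset (Finset.range_subset_range.mpr (by
      have := Nat.div_le_self n p; omega)) ?_
    intro m hm hm2
    simp only [Finset.mem_range] at hm hm2
    rw [coeff_pow_zero hu (by omega), zero_div]
  · rw [if_neg hn]
    symm
    apply Finset.sum_eq_zero
    intro m _
    rw [if_neg hn, zero_div]

end AH


section Padic
variable (p : ℕ) [hp : Fact p.Prime]

lemma norm_sub_le_max' (a b : ℚ_[p]) : ‖a - b‖ ≤ max ‖a‖ ‖b‖ := by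
  rw [sub_eq_add_neg]
  refine (IsUltrametricDist.norm_add_le_max a (-b)).trans ?_
  rw [norm_neg]

lemma padicValNat_factorial_le {m : ℕ} (hm : 1 ≤ m) :
    padicValNat p (m.factorial) ≤ m - 1 := by
  have hp2 : 2 ≤ p := hp.out.two_le
  have key : (p - 1) * padicValNat p (m.factorial) = m - (p.digits m).sum :=
    sub_one_mul_padicValNat_factorial m
  have hne : p.digits m ≠ [] := Nat.digits_ne_nil_iff_ne_zero.mpr (by omega)
  have hlast : (p.digits m).getLast hne ≠ 0 := Nat.getLast_digit_ne_zero p (by omega)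
  have hmem : (p.digits m).getLast hne ∈ p.digits m := List.getLast_mem hne
  have hsum : 1 ≤ (p.digits m).sum := by
    have := List.single_le_sum (fun x (_ : x ∈ p.digits m) => Nat.zero_le x) _ hmem
    omega
  have h1 : padicValNat p (m.factorial) ≤ (p - 1) * padicValNat p (m.factorial) :=
    Nat.le_mul_of_pos_left _ (by omega)
  omega

lemma norm_p_pow_div_factorial_le {m : ℕ} (hm : 1 ≤ m) :
    ‖(p : ℚ_[p]) ^ m / (Nat.factorial m : ℚ_[p])‖ ≤ (p : ℝ)⁻¹ := by
  have hp2 : 2 ≤ p := hp.out.two_le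
  have hpR : (1:ℝ) < (p : ℝ) := by exact_mod_cast hp.out.one_lt
  set v := padicValNat p (m.factorial) with hv
  have hfact : m.factorial = p ^ v * (m.factorial / p ^ v) := by
    rw [hv, ← Nat.factorization_def _ hp.out]
    exact (Nat.ordProj_mul_ordCompl_eq_self m.factorial p).symm
  have hndvd : ¬ p ∣ (m.factorial / p ^ v) := by
    rw [hv, ← Nat.factorization_def _ hp.out]
    exact Nat.not_dvd_ordCompl hp.out m.factorial_ne_zero
  have hq1 : ‖((m.factorial / p ^ v : ℕ) : ℚ_[p])‖ = 1 := by
    apply le_antisymm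
    · exact_mod_cast Padic.norm_int_le_one ((m.factorial / p ^ v : ℕ) : ℤ)
    · by_contra h
      push_neg at h
      have : ((p:ℤ)) ∣ ((m.factorial / p ^ v : ℕ) : ℤ) := by
        rw [← Padic.norm_intCast_lt_one_iff]
        exact_mod_cast h
      exact hndvd (by exact_mod_cast this)
  have hnf : ‖(Nat.factorial m : ℚ_[p])‖ = (p:ℝ) ^ (-(v:ℤ)) := by
    conv_lhs => rw [hfact]
    push_cast
    rw [norm_mul, hq1, mul_one, Padic.norm_p_pow]
  rw [norm_div, hnf, Padic.norm_p_pow]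
  have hvm : v ≤ m - 1 := padicValNat_factorial_le p hm
  rw [div_eq_mul_inv, ← zpow_neg, ← zpow_add₀ (by positivity : (p:ℝ) ≠ 0)]
  rw [show ((p:ℝ))⁻¹ = (p:ℝ) ^ (-1 : ℤ) by simp]
  refine zpow_le_zpow_right₀ (le_of_lt hpR) ?_
  omega


lemma coe_ringHom_apply (z : ℤ_[p]) : PadicInt.Coe.ringHom (p := p) z = (z : ℚ_[p]) := rfl

lemma norm_coe_le_one (z : ℤ_[p]) : ‖(z : ℚ_[p])‖ ≤ 1 := z.property

lemma G_coeff_bound (f : PowerSeries ℤ_[p]) {n : ℕ} (hn : 1 ≤ n) :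
    ‖coeff n (pexp ((p : ℚ_[p]) • PowerSeries.map (PadicInt.Coe.ringHom (p := p)) f))‖
      ≤ (p:ℝ)⁻¹ := by
  have hp0 : (0:ℝ) ≤ (p:ℝ)⁻¹ := by positivity
  rw [coeff_pexp]
  apply IsUltrametricDist.norm_sum_le_of_forall_le_of_nonneg hp0
  intro m _
  rcases Nat.eq_zero_or_pos m with rfl | hm
  · rw [pow_zero, coeff_one, if_neg (by omega : ¬ n = 0), zero_div, norm_zero]
    exact hp0
  · rw [smul_pow, coeff_smul, ← map_pow, coeff_map, smul_eq_mul, coe_ringHom_apply]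
    rw [show (p:ℚ_[p])^m * ((coeff n (f^m) : ℤ_[p]) : ℚ_[p]) / (Nat.factorial m : ℚ_[p])
        = ((p:ℚ_[p])^m / (Nat.factorial m : ℚ_[p])) * ((coeff n (f^m) : ℤ_[p]) : ℚ_[p])
      by ring]
    rw [norm_mul]
    calc ‖(p:ℚ_[p])^m / (Nat.factorial m : ℚ_[p])‖ * ‖((coeff n (f^m) : ℤ_[p]) : ℚ_[p])‖
        ≤ (p:ℝ)⁻¹ * 1 := mul_le_mul (norm_p_pow_div_factorial_le p hm)
          (norm_coe_le_one p _) (norm_nonneg _) hp0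
      _ = (p:ℝ)⁻¹ := mul_one _

lemma frob_estimate (T : Polynomial ℤ_[p]) (n : ℕ) :
    ‖(T ^ p).coeff n - (if p ∣ n then T.coeff (n / p) else 0)‖ ≤ (p:ℝ)⁻¹ := by
  set x : ℤ_[p] := (T ^ p).coeff n - (if p ∣ n then T.coeff (n / p) else 0) with hx
  have hfrob : (T.map (PadicInt.toZMod : ℤ_[p] →+* ZMod p)) ^ p
      = Polynomial.expand (ZMod p) p (T.map PadicInt.toZMod) := by
    have h := Polynomial.map_frobenius_expand p (T.map (PadicInt.toZMod : ℤ_[p] →+* ZMod p))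
    rw [ZMod.frobenius_zmod, Polynomial.map_id] at h
    exact h.symm
  have hker : PadicInt.toZMod x = 0 := by
    rw [hx, map_sub]
    have h1 : PadicInt.toZMod ((T ^ p).coeff n)
        = ((T.map (PadicInt.toZMod : ℤ_[p] →+* ZMod p)) ^ p).coeff n := by
      rw [← Polynomial.map_pow, Polynomial.coeff_map]
    have h2 : PadicInt.toZMod (if p ∣ n then T.coeff (n / p) else 0)
        = (if p ∣ n then (T.map (PadicInt.toZMod : ℤ_[p] →+* ZMod p)).coeff (n/p) else 0) := by
      split
      · rw [Polynomial.coeff_map]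
      · rw [map_zero]
    rw [h1, h2, hfrob, Polynomial.coeff_expand hp.out.pos, sub_self]
  have hmem : x ∈ Ideal.span {(p : ℤ_[p])} := by
    rw [← PadicInt.maximalIdeal_eq_span_p, ← PadicInt.ker_toZMod, RingHom.mem_ker]
    exact hker
  obtain ⟨y, hy⟩ := Ideal.mem_span_singleton.mp hmem
  rw [hy, norm_mul, PadicInt.norm_p]
  calc (p:ℝ)⁻¹ * ‖y‖ ≤ (p:ℝ)⁻¹ * 1 :=
        mul_le_mul_of_nonneg_left (PadicInt.norm_le_one y) (by positivity)
    _ = (p:ℝ)⁻¹ := mul_one _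

end Padic

end VostokovAux



/-- the Artin–Hasse type exponential
`E(f) = exp((1 + Δ/p + Δ²/p² + ⋯)(f))` sends `X·ℤ_p[[X]]` into `1 + X·ℤ_p[[X]]`:
for `f ∈ X·ℤ_p[[X]]`, `E(f)` has coefficients in `ℤ_p` and constant term `1`. -/
theorem vostokov_stmt3 (p : ℕ) [Fact p.Prime]
    (f : PowerSeries ℤ_[p]) (hf : constantCoeff f = 0) :
    ∃ g : PowerSeries ℤ_[p], constantCoeff g = 1 ∧
      PowerSeries.map (PadicInt.Coe.ringHom (p := p)) g =
        pexp (AHop p (PowerSeries.map (PadicInt.Coe.ringHom (p := p)) f)) := by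
  classical
  have hp : Fact p.Prime := ‹_›
  have hp2 : 2 ≤ p := hp.out.two_le
  open VostokovAux Finset in
  set fq : PowerSeries ℚ_[p] := PowerSeries.map (PadicInt.Coe.ringHom (p := p)) f with hfqdef
  have hfq0 : constantCoeff fq = 0 := by
    rw [hfqdef, ← coeff_zero_eq_constantCoeff_apply, coeff_map,
      coeff_zero_eq_constantCoeff_apply, hf, map_zero]
  set u : PowerSeries ℚ_[p] := AHop p fq with hudef
  have hu0 : constantCoeff u = 0 := constantCoeff_AHop p hfq0
  set Fs : PowerSeries ℚ_[p] := pexp u with hFsdef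
  set G : PowerSeries ℚ_[p] := pexp ((p : ℚ_[p]) • fq) with hGdef
  have hG0 : constantCoeff G = 1 := constantCoeff_pexp _
  have hF0 : coeff 0 Fs = 1 := by
    rw [coeff_zero_eq_constantCoeff_apply]; exact constantCoeff_pexp u
  have hDwork : Fs ^ p = G * Dop p Fs := by
    have h1 : (pexp u)^p = pexp ((p:ℕ) • u) := (pexp_nsmul p hu0).symm
    have h2 : ((p:ℕ) • u) = (p:ℚ_[p]) • u := (Nat.cast_smul_eq_nsmul ℚ_[p] p u).symm
    have h3 : (p:ℚ_[p]) • u = (p:ℚ_[p]) • fq + Dop p u := AH_rel p hfq0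
    have c1 : constantCoeff ((p:ℚ_[p]) • fq) = 0 := by
      rw [constantCoeff_smul, hfq0, smul_zero]
    have c2 : constantCoeff (Dop p u) = 0 := by
      rw [constantCoeff_Dop, hu0]
    calc Fs^p = pexp ((p:ℚ_[p]) • fq + Dop p u) := by rw [hFsdef, h1, h2, h3]
      _ = pexp ((p:ℚ_[p]) • fq) * pexp (Dop p u) := pexp_add c1 c2
      _ = G * Dop p Fs := by rw [hGdef, hFsdef, Dop_pexp p hu0]
  have hbound : ∀ n, ‖coeff n Fs‖ ≤ 1 := by
    intro n
    induction n using Nat.strong_induction_on with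
    | _ n IH =>
    rcases Nat.eq_zero_or_pos n with rfl | hn
    · rw [hF0]; simp
    set T : Polynomial ℤ_[p] := ∑ i ∈ Finset.range n, Polynomial.monomial i
      (if h : ‖coeff i Fs‖ ≤ 1 then (⟨coeff i Fs, h⟩ : ℤ_[p]) else 0) with hT
    have hTc : ∀ k, ((T.coeff k : ℤ_[p]) : ℚ_[p]) = if k < n then coeff k Fs else 0 := by
      intro k
      rw [hT, Polynomial.finset_sum_coeff]
      rw [Finset.sum_congr rfl (fun i _ => Polynomial.coeff_monomial)]
      rw [Finset.sum_ite_eq' (Finset.range n) k]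
      by_cases hk : k < n
      · rw [if_pos (Finset.mem_range.mpr hk), if_pos hk]
        exact congrArg (fun z : ℤ_[p] => (z : ℚ_[p])) (dif_pos (IH k hk))
      · rw [if_neg (fun hc => hk (Finset.mem_range.mp hc)), if_neg hk]
        rfl
    set Tq : PowerSeries ℚ_[p] :=
      PowerSeries.map (PadicInt.Coe.ringHom (p := p)) ((T : Polynomial ℤ_[p]) : PowerSeries ℤ_[p])
      with hTqdef
    have hTqc : ∀ k, coeff k Tq = if k < n then coeff k Fs else 0 := by
      intro k
      rw [hTqdef, coeff_map, Polynomial.coeff_coe, coe_ringHom_apply]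
      exact hTc k
    set E : PowerSeries ℚ_[p] := Fs - Tq with hEdef
    have hEc : ∀ k, k < n → coeff k E = 0 := by
      intro k hk
      rw [hEdef, map_sub, hTqc, if_pos hk, sub_self]
    have hEn : coeff n E = coeff n Fs := by
      rw [hEdef, map_sub, hTqc, if_neg (lt_irrefl n), sub_zero]
    have hXE : (X : PowerSeries ℚ_[p]) ^ n ∣ E := X_pow_dvd_iff.mpr hEc
    have hsplit : Fs = E + Tq := by rw [hEdef]; ring
    have hTq00 : coeff 0 Tq = 1 := by rw [hTqc, if_pos hn, hF0]
    have hTqpow0 : coeff 0 (Tq ^ (p-1)) = 1 := by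
      rw [coeff_zero_eq_constantCoeff_apply, map_pow, ← coeff_zero_eq_constantCoeff_apply,
        hTq00, one_pow]
    have step1 : coeff n (Fs ^ p) = coeff n (Tq ^ p) + p * coeff n Fs := by
      conv_lhs => rw [hsplit]
      rw [add_pow, map_sum]
      have hvan : ∀ k ∈ Finset.range (p+1), k ∉ ({0, 1} : Finset ℕ) →
          coeff n (E ^ k * Tq ^ (p - k) * ((p.choose k : ℕ) : PowerSeries ℚ_[p])) = 0 := by
        intro k _ hk2
        simp only [Finset.mem_insert, Finset.mem_singleton] at hk2
        push_neg at hk2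
        obtain ⟨e, he⟩ := hXE
        have : (X : PowerSeries ℚ_[p]) ^ (n * k)
            ∣ E ^ k * Tq ^ (p - k) * ((p.choose k : ℕ) : PowerSeries ℚ_[p]) := by
          rw [he, mul_pow, ← pow_mul]
          exact Dvd.dvd.mul_right (Dvd.dvd.mul_right (dvd_mul_right _ _) _) _
        refine X_pow_dvd_iff.mp this n ?_
        have hk2' : 2 ≤ k := by omega
        calc n < n * 2 := by omega
          _ ≤ n * k := Nat.mul_le_mul_left n hk2'
      rw [← Finset.sum_subset (by
          intro x hx
          simp only [Finset.mem_insert, Finset.mem_singleton, Finset.mem_range] at hx ⊢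
          omega) hvan]
      rw [Finset.sum_pair (by omega : (0:ℕ) ≠ 1)]
      congr 1
      · rw [pow_zero, one_mul, Nat.sub_zero, Nat.choose_zero_right]
        push_cast
        rw [mul_one]
      · rw [pow_one, Nat.choose_one_right]
        rw [show ((p : ℕ) : PowerSeries ℚ_[p]) = C ((p:ℕ) : ℚ_[p]) from (map_natCast C p).symm]
        rw [coeff_mul_C, coeff_mul, Finset.sum_eq_single (n, 0)]
        · rw [hEn, hTqpow0, mul_one, mul_comm]
        · intro b hb hbne
          rcases Nat.lt_or_ge b.1 n with hb1 | hb1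
          · rw [hEc b.1 hb1, zero_mul]
          · exfalso
            have hsum := Finset.HasAntidiagonal.mem_antidiagonal.mp hb
            have : b.1 = n ∧ b.2 = 0 := by omega
            exact hbne (Prod.ext this.1 this.2)
        · intro hmem
          exact absurd (Finset.HasAntidiagonal.mem_antidiagonal.mpr (by omega)) hmem
    have hndiv : p ∣ n → n / p < n := fun _ => Nat.div_lt_self hn hp.out.one_lt
    have step2 : ‖coeff n (Tq ^ p)
        - (if p ∣ n then coeff (n/p) Fs else 0)‖ ≤ (p:ℝ)⁻¹ := by
      have hTpow : coeff n (Tq ^ p)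
          = ((((T ^ p).coeff n : ℤ_[p])) : ℚ_[p]) := by
        rw [hTqdef, ← map_pow, coeff_map, ← Polynomial.coe_pow, Polynomial.coeff_coe,
          coe_ringHom_apply]
      have hw : (if p ∣ n then coeff (n/p) Fs else 0)
          = (((if p ∣ n then T.coeff (n/p) else 0 : ℤ_[p])) : ℚ_[p]) := by
        by_cases hdv : p ∣ n
        · rw [if_pos hdv, if_pos hdv, hTc (n/p), if_pos (hndiv hdv)]
        · rw [if_neg hdv, if_neg hdv]
          rfl
      rw [hTpow, hw, ← PadicInt.coe_sub, ← PadicInt.norm_def]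
      exact frob_estimate p T n
    have step3 : ‖coeff n (G * Dop p Fs)
        - (if p ∣ n then coeff (n/p) Fs else 0)‖ ≤ (p:ℝ)⁻¹ := by
      rw [coeff_mul]
      have hmem : ((0:ℕ), n) ∈ Finset.HasAntidiagonal.antidiagonal n := Finset.HasAntidiagonal.mem_antidiagonal.mpr (by omega)
      rw [← Finset.add_sum_erase _ _ hmem]
      have hval : coeff ((0:ℕ), n).1 G * coeff ((0:ℕ), n).2 (Dop p Fs)
          = (if p ∣ n then coeff (n/p) Fs else 0) := by
        rw [show ((0:ℕ), n).1 = 0 from rfl, show ((0:ℕ), n).2 = n from rfl,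
          coeff_zero_eq_constantCoeff_apply, hG0, one_mul, coeff_Dop]
      rw [hval, add_sub_cancel_left]
      apply IsUltrametricDist.norm_sum_le_of_forall_le_of_nonneg (by positivity)
      intro x hx
      rw [Finset.mem_erase] at hx
      obtain ⟨hxne, hxmem⟩ := hx
      have hxsum : x.1 + x.2 = n := Finset.HasAntidiagonal.mem_antidiagonal.mp hxmem
      have hx1 : 1 ≤ x.1 := by
        rcases Nat.eq_zero_or_pos x.1 with h0 | h1
        · exfalso
          exact hxne (Prod.ext h0 (by omega))
        · exact h1
      have hx2 : x.2 < n := by omega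
      rw [norm_mul]
      have hg : ‖coeff x.1 G‖ ≤ (p:ℝ)⁻¹ := by
        rw [hGdef, hfqdef]
        exact G_coeff_bound p f hx1
      have hd : ‖coeff x.2 (Dop p Fs)‖ ≤ 1 := by
        rw [coeff_Dop]
        by_cases hdv : p ∣ x.2
        · rw [if_pos hdv]
          exact IH (x.2/p) (by
            have := Nat.div_le_self x.2 p
            omega)
        · rw [if_neg hdv, norm_zero]
          exact zero_le_one
      calc ‖coeff x.1 G‖ * ‖coeff x.2 (Dop p Fs)‖
          ≤ (p:ℝ)⁻¹ * 1 := mul_le_mul hg hd (norm_nonneg _) (by positivity)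
        _ = (p:ℝ)⁻¹ := mul_one _
    have key : (p:ℚ_[p]) * coeff n Fs
        = coeff n (G * Dop p Fs) - coeff n (Tq ^ p) := by
      have hcoe := congrArg (coeff n) hDwork
      rw [step1] at hcoe
      linear_combination hcoe
    have hnorm : ‖(p:ℚ_[p]) * coeff n Fs‖ ≤ (p:ℝ)⁻¹ := by
      rw [key, show coeff n (G * Dop p Fs) - coeff n (Tq ^ p)
          = (coeff n (G * Dop p Fs) - (if p ∣ n then coeff (n/p) Fs else 0))
            - (coeff n (Tq ^ p) - (if p ∣ n then coeff (n/p) Fs else 0)) by ring]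
      exact (norm_sub_le_max' p _ _).trans (max_le step3 step2)
    rw [norm_mul, Padic.norm_p] at hnorm
    have hpR : (0:ℝ) < (p:ℝ)⁻¹ := by positivity
    nlinarith [norm_nonneg (coeff n Fs)]
  refine ⟨PowerSeries.mk fun n => (⟨coeff n Fs, hbound n⟩ : ℤ_[p]), ?_, ?_⟩
  · rw [← coeff_zero_eq_constantCoeff_apply]
    erw [coeff_mk]
    exact Subtype.ext (by simp [hF0])
  · ext n
    rw [coeff_map]
    erw [coeff_mk]
    rfl
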